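/- Let t>0 and let φ be a continuously differentiable function on the closed half plane such that φ is bounded, φ and ∂₂φ are integrable on ℝ²₊, and the boundary trace φ(·,0) is integrable on ℝ. Then for every x ∈ ℝ²₊, ∫_{ℝ²₊} (Γ(x−y,t) + Γ(x−y*,t)) ∂_{y₂}φ(y) dy = ∂_{x₂} [ ∫_{ℝ²₊} (Γ(x−y,t) − Γ(x−y*,t)) φ(y) dy ] − 2Γ₀(x₂,t) ∫_ℝ Γ₀(x₁−y₁,t) φ(y₁,0) dy₁; in other words, e^{tΔ_N}∂₂φ = ∂₂ e^{tΔ_D}φ − 2Γ₀(x₂,t) e^{t∂₁²}φ(·,0). -/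

import Mathlib

open MeasureTheory Real
open scoped ENNReal

noncomputable section

/-- The open upper half plane ℝ²₊ = {x : x₂ > 0}. -/
def upperHalf : Set (ℝ × ℝ) := {x | 0 < x.2}

/-- 2D heat kernel Γ(x,t) = (4πt)⁻¹ exp(−|x|²/(4t)). -/
def heatK (x : ℝ × ℝ) (t : ℝ) : ℝ :=
  (4 * π * t)⁻¹ * Real.exp (-(x.1 ^ 2 + x.2 ^ 2) / (4 * t))

/-- 1D heat kernel Γ₀(r,t) = (4πt)^{-1/2} exp(−r²/(4t)). -/
def heatK1 (r t : ℝ) : ℝ :=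
  (Real.sqrt (4 * π * t))⁻¹ * Real.exp (-r ^ 2 / (4 * t))

/-- ∂²_{z₁} E(z) = (z₁² − z₂²)/(2π|z|⁴), for E(z) = −(2π)⁻¹ log|z|. -/
def d2E (z : ℝ × ℝ) : ℝ :=
  (z.1 ^ 2 - z.2 ^ 2) / (2 * π * (z.1 ^ 2 + z.2 ^ 2) ^ 2)

/-- Poisson kernel P_s(r) = s/(π(r²+s²)). -/
def Pker (s r : ℝ) : ℝ := s / (π * (r ^ 2 + s ^ 2))

/-- Conjugate Poisson kernel Q_s(r) = r/(π(r²+s²)). -/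
def Qker (s r : ℝ) : ℝ := r / (π * (r ^ 2 + s ^ 2))

/-- ∇⊥E(z) = (∂₂E(z), −∂₁E(z)) for E(z) = −(2π)⁻¹ log|z|. -/
def gradPerpE (z : ℝ × ℝ) : ℝ × ℝ :=
  (-z.2 / (2 * π * (z.1 ^ 2 + z.2 ^ 2)), z.1 / (2 * π * (z.1 ^ 2 + z.2 ^ 2)))

/-- The Biot–Savart kernel ∇⊥_x D(x,y) = ∇⊥E(x−y) − ∇⊥E(x−y*). -/
def bsKernel (x y : ℝ × ℝ) : ℝ × ℝ :=
  gradPerpE (x.1 - y.1, x.2 - y.2) - gradPerpE (x.1 - y.1, x.2 + y.2)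

/-- Integral of a real function against a finite signed measure (via Jordan decomposition). -/
def sInt (μ : SignedMeasure (ℝ × ℝ)) (f : ℝ × ℝ → ℝ) : ℝ :=
  (∫ y, f y ∂μ.toJordanDecomposition.posPart) - ∫ y, f y ∂μ.toJordanDecomposition.negPart

/-- Integral of a vector-valued function against a finite signed measure. -/
def sIntV (μ : SignedMeasure (ℝ × ℝ)) (f : ℝ × ℝ → ℝ × ℝ) : ℝ × ℝ :=
  (∫ y, f y ∂μ.toJordanDecomposition.posPart) - ∫ y, f y ∂μ.toJordanDecomposition.negPart

/-- Total variation norm ‖μ‖_M of a finite signed measure. -/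
def normM (μ : SignedMeasure (ℝ × ℝ)) : ℝ := (μ.totalVariation Set.univ).toReal

/-- The vorticity kernel W(x,y,t). -/
def Wk (x y : ℝ × ℝ) (t : ℝ) : ℝ :=
  heatK (x.1 - y.1, x.2 - y.2) t + heatK (x.1 - y.1, x.2 + y.2) t
    + 4 * ∫ z₂ in (0:ℝ)..y.2, ∫ z₁ : ℝ, heatK (x.1 - z₁, x.2 + z₂) t * d2E (z₁ - y.1, z₂ - y.2)
    - 2 * heatK1 x.2 t * ∫ z₁ : ℝ, heatK1 (x.1 - z₁) t * Pker y.2 (z₁ - y.1)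

/-- T(t)ω₀(x) = ∫ W(x,y,t) dω₀(y) for a finite signed measure ω₀. -/
def Tsg (ω₀ : SignedMeasure (ℝ × ℝ)) (t : ℝ) (x : ℝ × ℝ) : ℝ :=
  sInt ω₀ (fun y => Wk x y t)

/-- The boundary trace operator T₁μ(x₁) = π⁻¹ ∫ y₂/((x₁−y₁)²+y₂²) dμ(y). -/
def T1op (μ : SignedMeasure (ℝ × ℝ)) (x₁ : ℝ) : ℝ :=
  π⁻¹ * sInt μ (fun y => y.2 / ((x₁ - y.1) ^ 2 + y.2 ^ 2))


open Filter Topology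

/-- derivative kernel -/
def Kd (t s y₂ : ℝ) : ℝ :=
  -((s - y₂)/(2*t)) * heatK1 (s - y₂) t + ((s + y₂)/(2*t)) * heatK1 (s + y₂) t

/-- Neumann kernel -/
def Nk (t b y₂ : ℝ) : ℝ := heatK1 (b - y₂) t + heatK1 (b + y₂) t

lemma heatK_prod {t : ℝ} (ht : 0 < t) (a b : ℝ) :
    heatK (a, b) t = heatK1 a t * heatK1 b t := by
  have h4 : (0:ℝ) < 4*π*t := by positivity
  simp only [heatK, heatK1]
  rw [mul_mul_mul_comm, ← mul_inv, Real.mul_self_sqrt h4.le, ← Real.exp_add]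
  congr 1
  ring

lemma heatK1_nonneg (r t : ℝ) : 0 ≤ heatK1 r t := by
  unfold heatK1; positivity

lemma heatK1_le {t : ℝ} (ht : 0 < t) (r : ℝ) : heatK1 r t ≤ (Real.sqrt (4*π*t))⁻¹ := by
  unfold heatK1
  have h1 : Real.exp (-r^2/(4*t)) ≤ 1 := by
    apply Real.exp_le_one_iff.2
    have : 0 ≤ r^2/(4*t) := by positivity
    rw [neg_div]; linarith
  have h0 : (0:ℝ) ≤ (Real.sqrt (4*π*t))⁻¹ := by positivity
  calc (Real.sqrt (4*π*t))⁻¹ * Real.exp (-r^2/(4*t)) ≤ (Real.sqrt (4*π*t))⁻¹ * 1 := by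
        exact mul_le_mul_of_nonneg_left h1 h0
    _ = _ := mul_one _

lemma abs_mul_exp_le {t : ℝ} (ht : 0 < t) (r : ℝ) :
    |r| * Real.exp (-r^2/(4*t)) ≤ Real.sqrt (2*t) := by
  set s := Real.sqrt (2*t) with hs
  have hs0 : 0 < s := Real.sqrt_pos.2 (by linarith)
  have hs2 : s^2 = 2*t := Real.sq_sqrt (by linarith)
  have hexp : r^2/(4*t) + 1 ≤ Real.exp (r^2/(4*t)) := by
    have := Real.add_one_le_exp (r^2/(4*t)); linarith
  have he0 : 0 < Real.exp (r^2/(4*t)) := Real.exp_pos _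
  have h3 : |r| * (4*t) ≤ s * (r^2 + 4*t) := by
    nlinarith [mul_nonneg hs0.le (sq_nonneg (|r| - s)), sq_abs r, abs_nonneg r]
  have h4 : s * (r^2/(4*t) + 1) ≤ s * Real.exp (r^2/(4*t)) :=
    mul_le_mul_of_nonneg_left hexp hs0.le
  have h5 : s * (r^2/(4*t) + 1) = s * (r^2 + 4*t) / (4*t) := by
    field_simp
  have h6 : |r| ≤ s * (r^2 + 4*t) / (4*t) := by
    rw [le_div_iff₀ (show (0:ℝ) < 4*t by linarith)]; exact h3
  have h2 : |r| ≤ s * Real.exp (r^2/(4*t)) := by linarith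
  calc |r| * Real.exp (-r^2/(4*t))
      ≤ (s * Real.exp (r^2/(4*t))) * Real.exp (-r^2/(4*t)) :=
        mul_le_mul_of_nonneg_right h2 (Real.exp_nonneg _)
    _ = s := by
        rw [mul_assoc, ← Real.exp_add, show r^2/(4*t) + -r^2/(4*t) = 0 by ring,
          Real.exp_zero, mul_one]

lemma abs_mul_heatK1_le {t : ℝ} (ht : 0 < t) (r : ℝ) :
    |r| * heatK1 r t ≤ Real.sqrt (2*t) * (Real.sqrt (4*π*t))⁻¹ := by
  unfold heatK1
  have h0 : (0:ℝ) ≤ (Real.sqrt (4*π*t))⁻¹ := by positivity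
  calc |r| * ((Real.sqrt (4*π*t))⁻¹ * Real.exp (-r^2/(4*t)))
      = (|r| * Real.exp (-r^2/(4*t))) * (Real.sqrt (4*π*t))⁻¹ := by ring
    _ ≤ Real.sqrt (2*t) * (Real.sqrt (4*π*t))⁻¹ :=
        mul_le_mul_of_nonneg_right (abs_mul_exp_le ht r) h0

lemma hasDerivAt_heatK1 {t : ℝ} (ht : 0 < t) (r : ℝ) :
    HasDerivAt (fun r => heatK1 r t) (-(r/(2*t)) * heatK1 r t) r := by
  unfold heatK1
  have h : HasDerivAt (fun r : ℝ => -r^2/(4*t)) (-(2*r)/(4*t)) r := by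
    simpa [neg_div] using ((hasDerivAt_pow 2 r).neg.div_const (4*t))
  have h2 := (h.exp).const_mul ((Real.sqrt (4*π*t))⁻¹)
  refine h2.congr_deriv ?_
  have ht' : (4:ℝ)*t ≠ 0 := by positivity
  ring

lemma continuous_heatK1 (t : ℝ) : Continuous fun r => heatK1 r t := by
  unfold heatK1
  exact continuous_const.mul ((continuous_pow 2).neg.div_const (4*t)).rexp

lemma continuous_Kd (t b : ℝ) : Continuous (Kd t b) := by
  unfold Kd
  have c1 : Continuous fun y₂ : ℝ => b - y₂ := continuous_const.sub continuous_id
  have c2 : Continuous fun y₂ : ℝ => b + y₂ := continuous_const.add continuous_id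
  exact (((c1.div_const (2*t)).neg).mul ((continuous_heatK1 t).comp c1)).add
    ((c2.div_const (2*t)).mul ((continuous_heatK1 t).comp c2))

lemma continuous_Nk (t b : ℝ) : Continuous (Nk t b) := by
  unfold Nk
  have c1 : Continuous fun y₂ : ℝ => b - y₂ := continuous_const.sub continuous_id
  have c2 : Continuous fun y₂ : ℝ => b + y₂ := continuous_const.add continuous_id
  exact ((continuous_heatK1 t).comp c1).add ((continuous_heatK1 t).comp c2)

lemma Kd_abs_le {t : ℝ} (ht : 0 < t) (s y₂ : ℝ) :
    |Kd t s y₂| ≤ Real.sqrt (2*t) * (Real.sqrt (4*π*t))⁻¹ / t := by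
  have key : ∀ r : ℝ, |r/(2*t) * heatK1 r t| ≤ Real.sqrt (2*t) * (Real.sqrt (4*π*t))⁻¹ / (2*t) := by
    intro r
    rw [abs_mul, abs_div, abs_of_pos (show (0:ℝ) < 2*t by linarith),
      abs_of_nonneg (heatK1_nonneg r t), div_mul_eq_mul_div]
    exact div_le_div_of_nonneg_right (abs_mul_heatK1_le ht r) (by linarith)
  have h2t : (0:ℝ) < 2*t := by linarith
  calc |Kd t s y₂| ≤ |-(((s - y₂))/(2*t)) * heatK1 (s - y₂) t| + |((s + y₂))/(2*t) * heatK1 (s + y₂) t| := by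
        unfold Kd; exact abs_add_le _ _
    _ ≤ Real.sqrt (2*t) * (Real.sqrt (4*π*t))⁻¹ / (2*t)
        + Real.sqrt (2*t) * (Real.sqrt (4*π*t))⁻¹ / (2*t) := by
        rw [neg_mul, abs_neg]
        exact add_le_add (key _) (key _)
    _ = Real.sqrt (2*t) * (Real.sqrt (4*π*t))⁻¹ / t := by
        field_simp; ring

lemma Nk_nonneg (t b y₂ : ℝ) : 0 ≤ Nk t b y₂ :=
  add_nonneg (heatK1_nonneg _ _) (heatK1_nonneg _ _)

lemma Nk_le {t : ℝ} (ht : 0 < t) (b y₂ : ℝ) : Nk t b y₂ ≤ 2 * (Real.sqrt (4*π*t))⁻¹ := by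
  have := heatK1_le ht (b - y₂)
  have := heatK1_le ht (b + y₂)
  unfold Nk; linarith

lemma hasDerivAt_diff_kernel {t : ℝ} (ht : 0 < t) (y₂ s : ℝ) :
    HasDerivAt (fun s => heatK1 (s - y₂) t - heatK1 (s + y₂) t) (Kd t s y₂) s := by
  have h1 : HasDerivAt (fun s : ℝ => heatK1 (s - y₂) t)
      (-((s - y₂)/(2*t)) * heatK1 (s - y₂) t) s := by
    have := (hasDerivAt_heatK1 ht (s - y₂)).comp s ((hasDerivAt_id s).sub_const y₂)
    simpa [Function.comp_def] using this
  have h2 : HasDerivAt (fun s : ℝ => heatK1 (s + y₂) t)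
      (-((s + y₂)/(2*t)) * heatK1 (s + y₂) t) s := by
    have := (hasDerivAt_heatK1 ht (s + y₂)).comp s ((hasDerivAt_id s).add_const y₂)
    simpa [Function.comp_def] using this
  have := h1.sub h2
  refine this.congr_deriv ?_
  unfold Kd; ring

lemma hasDerivAt_Nk {t : ℝ} (ht : 0 < t) (b y₂ : ℝ) :
    HasDerivAt (fun y₂ => Nk t b y₂) (-(Kd t b y₂)) y₂ := by
  have h1 : HasDerivAt (fun y₂ : ℝ => heatK1 (b - y₂) t)
      ((b - y₂)/(2*t) * heatK1 (b - y₂) t) y₂ := by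
    have := (hasDerivAt_heatK1 ht (b - y₂)).comp y₂ ((hasDerivAt_id y₂).const_sub b)
    refine this.congr_deriv ?_
    ring
  have h2 : HasDerivAt (fun y₂ : ℝ => heatK1 (b + y₂) t)
      (-((b + y₂)/(2*t)) * heatK1 (b + y₂) t) y₂ := by
    have := (hasDerivAt_heatK1 ht (b + y₂)).comp y₂ ((hasDerivAt_const y₂ b).add (hasDerivAt_id y₂))
    simpa [Function.comp_def] using this
  have := h1.add h2
  refine this.congr_deriv ?_
  unfold Kd; ring

lemma tendsto_heatK1_aux {t : ℝ} (ht : 0 < t) {g : ℝ → ℝ}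
    (hg : Tendsto (fun s => (g s)^2) atTop atTop) :
    Tendsto (fun s => heatK1 (g s) t) atTop (𝓝 0) := by
  unfold heatK1
  have h2 : Tendsto (fun s => (g s)^2/(4*t)) atTop atTop :=
    hg.atTop_div_const (by linarith)
  have h3 : Tendsto (fun s => -((g s)^2/(4*t))) atTop atBot := tendsto_neg_atTop_atBot.comp h2
  have h4 : Tendsto (fun s => Real.exp (-(g s)^2/(4*t))) atTop (𝓝 0) := by
    have := Real.tendsto_exp_atBot.comp h3
    simpa [neg_div, Function.comp_def] using this
  have := h4.const_mul ((Real.sqrt (4*π*t))⁻¹)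
  simpa using this

lemma tendsto_Nk {t : ℝ} (ht : 0 < t) (b : ℝ) :
    Tendsto (fun y₂ => Nk t b y₂) atTop (𝓝 0) := by
  have hsq1 : Tendsto (fun s : ℝ => (b - s)^2) atTop atTop := by
    have h := (tendsto_pow_atTop (two_ne_zero)).comp
      (tendsto_atTop_add_const_right atTop (-b) tendsto_id)
    apply h.congr
    intro s; simp [Function.comp_def]; ring
  have hsq2 : Tendsto (fun s : ℝ => (b + s)^2) atTop atTop := by
    have h := (tendsto_pow_atTop (two_ne_zero)).comp
      (tendsto_atTop_add_const_left atTop b tendsto_id)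
    apply h.congr
    intro s; simp [Function.comp_def]
  have := (tendsto_heatK1_aux ht hsq1).add (tendsto_heatK1_aux ht hsq2)
  simpa [Nk] using this

lemma inner_ibp {t b M : ℝ} (ht : 0 < t) {ψ ψ' : ℝ → ℝ}
    (hψcont : ContinuousWithinAt ψ (Set.Ici 0) 0)
    (hψdiff : ∀ y₂ ∈ Set.Ioi (0:ℝ), HasDerivAt ψ (ψ' y₂) y₂)
    (hψbd : ∀ y₂, 0 ≤ y₂ → |ψ y₂| ≤ M)
    (hψint : IntegrableOn ψ (Set.Ioi 0))
    (hψ'int : IntegrableOn ψ' (Set.Ioi 0)) :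
    ∫ y₂ in Set.Ioi (0:ℝ), (Kd t b y₂ * ψ y₂ - Nk t b y₂ * ψ' y₂)
      = 2 * heatK1 b t * ψ 0 := by
  set u : ℝ → ℝ := fun y₂ => Nk t b y₂ * ψ y₂ with hu_def
  set u' : ℝ → ℝ := fun y₂ => -(Kd t b y₂) * ψ y₂ + Nk t b y₂ * ψ' y₂ with hu'_def
  have hu : ∀ y₂ ∈ Set.Ioi (0:ℝ), HasDerivAt u (u' y₂) y₂ := fun y₂ hy₂ =>
    (hasDerivAt_Nk ht b y₂).mul (hψdiff y₂ hy₂)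
  have hucont : ContinuousWithinAt u (Set.Ici 0) 0 :=
    ((continuous_Nk t b).continuousAt.continuousWithinAt).mul hψcont
  have hKdbd : ∀ y₂ : ℝ, ‖-(Kd t b y₂)‖ ≤ Real.sqrt (2*t) * (Real.sqrt (4*π*t))⁻¹ / t := by
    intro y₂; rw [norm_neg, Real.norm_eq_abs]; exact Kd_abs_le ht b y₂
  have hNkbd : ∀ y₂ : ℝ, ‖Nk t b y₂‖ ≤ 2 * (Real.sqrt (4*π*t))⁻¹ := by
    intro y₂
    rw [Real.norm_eq_abs, abs_of_nonneg (Nk_nonneg t b y₂)]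
    exact Nk_le ht b y₂
  have huint : IntegrableOn u' (Set.Ioi 0) := by
    apply Integrable.add
    · exact hψint.bdd_mul ((continuous_Kd t b).neg.aestronglyMeasurable) (Filter.Eventually.of_forall hKdbd)
    · exact hψ'int.bdd_mul ((continuous_Nk t b).aestronglyMeasurable) (Filter.Eventually.of_forall hNkbd)
  have hM0 : 0 ≤ M := (abs_nonneg _).trans (hψbd 0 le_rfl)
  have hulim : Tendsto u atTop (𝓝 0) := by
    apply squeeze_zero_norm' (a := fun y₂ => M * Nk t b y₂)
    · filter_upwards [eventually_ge_atTop (0:ℝ)] with y₂ hy₂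
      rw [Real.norm_eq_abs, abs_mul, abs_of_nonneg (Nk_nonneg t b y₂)]
      calc Nk t b y₂ * |ψ y₂| ≤ Nk t b y₂ * M :=
            mul_le_mul_of_nonneg_left (hψbd y₂ hy₂) (Nk_nonneg t b y₂)
        _ = M * Nk t b y₂ := mul_comm _ _
    · have := (tendsto_Nk ht b).const_mul M
      simpa using this
  have key := integral_Ioi_of_hasDerivAt_of_tendsto hucont hu huint hulim
  have hpt : ∀ y₂ : ℝ, Kd t b y₂ * ψ y₂ - Nk t b y₂ * ψ' y₂ = -(u' y₂) := by
    intro y₂; simp only [hu'_def]; ring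
  calc ∫ y₂ in Set.Ioi (0:ℝ), (Kd t b y₂ * ψ y₂ - Nk t b y₂ * ψ' y₂)
      = ∫ y₂ in Set.Ioi (0:ℝ), -(u' y₂) := by
        exact integral_congr_ae (Filter.Eventually.of_forall fun y₂ => hpt y₂)
    _ = -∫ y₂ in Set.Ioi (0:ℝ), u' y₂ := integral_neg _
    _ = u 0 := by rw [key]; ring
    _ = 2 * heatK1 b t * ψ 0 := by
        simp only [hu_def, Nk, sub_zero, add_zero]; ring


/-- e^{tΔ_N}∂₂φ = ∂₂ e^{tΔ_D}φ − 2Γ₀(x₂,t) e^{t∂₁²}φ(·,0), i.e. for x ∈ ℝ²₊ the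
x₂-derivative of the Dirichlet heat extension of φ exists and equals the Neumann heat extension
of ∂₂φ plus the boundary correction 2Γ₀(x₂,t) e^{t∂₁²}φ(·,0). -/
theorem neumann_dirichlet_commute (t : ℝ) (ht : 0 < t) (φ : ℝ × ℝ → ℝ)
    (hφ : ContDiffOn ℝ 1 φ {x : ℝ × ℝ | 0 ≤ x.2})
    (hbd : ∃ M, ∀ x : ℝ × ℝ, 0 ≤ x.2 → |φ x| ≤ M)
    (hint : IntegrableOn φ upperHalf)
    (hint2 : IntegrableOn (fun y => fderiv ℝ φ y (0, 1)) upperHalf)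
    (htrace : Integrable (fun y₁ : ℝ => φ (y₁, 0))) :
    ∀ x ∈ upperHalf,
      HasDerivAt
        (fun s => ∫ y in upperHalf,
          (heatK (x.1 - y.1, s - y.2) t - heatK (x.1 - y.1, s + y.2) t) * φ y)
        ((∫ y in upperHalf,
          (heatK (x.1 - y.1, x.2 - y.2) t + heatK (x.1 - y.1, x.2 + y.2) t)
            * fderiv ℝ φ y (0, 1))
          + 2 * heatK1 x.2 t * ∫ y₁ : ℝ, heatK1 (x.1 - y₁) t * φ (y₁, 0))
        x.2 := by
  intro x hx
  obtain ⟨M, hM⟩ := hbd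
  have hb : 0 < x.2 := hx
  have h4 : (0:ℝ) < 4*π*t := by positivity
  have hc0 : (0:ℝ) ≤ (Real.sqrt (4*π*t))⁻¹ := by positivity
  simp only [heatK_prod ht, ← mul_sub, ← mul_add]
  -- notation
  set a := x.1 with ha
  set b := x.2 with hbdef
  -- measurability of upperHalf and slicing facts
  have hUH : upperHalf = Set.univ ×ˢ Set.Ioi (0:ℝ) := by
    ext y; simp [upperHalf, Set.mem_prod, Set.mem_Ioi]
  have hopen : IsOpen upperHalf := isOpen_lt continuous_const continuous_snd
  have hmeasUH : MeasurableSet upperHalf := hopen.measurableSet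
  -- differentiability of slices of φ
  have hdiff_phi : ∀ (y₁ : ℝ), ∀ y₂ ∈ Set.Ioi (0:ℝ),
      HasDerivAt (fun s => φ (y₁, s)) (fderiv ℝ φ (y₁, y₂) (0,1)) y₂ := by
    intro y₁ y₂ hy₂
    have hmem : {x : ℝ × ℝ | 0 ≤ x.2} ∈ 𝓝 (y₁, y₂) :=
      Filter.mem_of_superset (hopen.mem_nhds hy₂) (fun z hz => le_of_lt (show (0:ℝ) < z.2 from hz))
    have hdiff : DifferentiableAt ℝ φ (y₁, y₂) :=
      ((hφ.differentiableOn one_ne_zero) (y₁, y₂) (le_of_lt (hy₂ : (0:ℝ) < y₂) : (0:ℝ) ≤ (y₁, y₂).2)).differentiableAt hmem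
    have hg : HasDerivAt (fun s : ℝ => ((y₁ : ℝ), s)) ((0 : ℝ), (1 : ℝ)) y₂ :=
      (hasDerivAt_const y₂ y₁).prodMk (hasDerivAt_id y₂)
    simpa [Function.comp_def] using hdiff.hasFDerivAt.comp_hasDerivAt y₂ hg
  have hcont_phi : ∀ y₁ : ℝ, ContinuousWithinAt (fun s => φ (y₁, s)) (Set.Ici 0) 0 := by
    intro y₁
    have h1 : ContinuousWithinAt φ {x : ℝ × ℝ | 0 ≤ x.2} (y₁, 0) :=
      (hφ.continuousOn) _ (by simp)
    have h2 : ContinuousWithinAt (fun s : ℝ => ((y₁:ℝ), s)) (Set.Ici 0) 0 :=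
      (continuous_const.prodMk continuous_id).continuousWithinAt
    exact (h1.comp h2 (fun s hs => hs))
  -- kernel continuity facts
  have hker_cont : ∀ s : ℝ, Continuous fun y : ℝ × ℝ =>
      heatK1 (a - y.1) t * (heatK1 (s - y.2) t - heatK1 (s + y.2) t) := by
    intro s
    exact ((continuous_heatK1 t).comp (continuous_const.sub continuous_fst)).mul
      (((continuous_heatK1 t).comp (continuous_const.sub continuous_snd)).sub
        ((continuous_heatK1 t).comp (continuous_const.add continuous_snd)))
  have hKdker_cont : ∀ s : ℝ, Continuous fun y : ℝ × ℝ =>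
      heatK1 (a - y.1) t * Kd t s y.2 := by
    intro s
    exact ((continuous_heatK1 t).comp (continuous_const.sub continuous_fst)).mul
      ((continuous_Kd t s).comp continuous_snd)
  have hNkker_cont : Continuous fun y : ℝ × ℝ =>
      heatK1 (a - y.1) t * Nk t b y.2 :=
    ((continuous_heatK1 t).comp (continuous_const.sub continuous_fst)).mul
      ((continuous_Nk t b).comp continuous_snd)
  -- Step 1 : differentiate under the integral
  set c1 : ℝ := Real.sqrt (2*t) * (Real.sqrt (4*π*t))⁻¹ with hc1
  have hbnd_Kdker : ∀ (s : ℝ) (y : ℝ × ℝ),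
      |heatK1 (a - y.1) t * Kd t s y.2| ≤ (Real.sqrt (4*π*t))⁻¹ * (c1 / t) := by
    intro s y
    rw [abs_mul, abs_of_nonneg (heatK1_nonneg _ _)]
    have h1 := heatK1_le ht (a - y.1)
    have h2 := Kd_abs_le ht s y.2
    exact mul_le_mul h1 h2 (abs_nonneg _) hc0
  have step1 : HasDerivAt
      (fun s => ∫ y in upperHalf,
        heatK1 (a - y.1) t * (heatK1 (s - y.2) t - heatK1 (s + y.2) t) * φ y)
      (∫ y in upperHalf, heatK1 (a - y.1) t * Kd t b y.2 * φ y) b := by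
    have := hasDerivAt_integral_of_dominated_loc_of_deriv_le
      (F := fun s (y : ℝ × ℝ) =>
        heatK1 (a - y.1) t * (heatK1 (s - y.2) t - heatK1 (s + y.2) t) * φ y)
      (F' := fun s (y : ℝ × ℝ) => heatK1 (a - y.1) t * Kd t s y.2 * φ y)
      (μ := volume.restrict upperHalf) (x₀ := b)
      (bound := fun y => ((Real.sqrt (4*π*t))⁻¹ * (c1 / t)) * |φ y|)
      (s := Metric.ball b 1) (Metric.ball_mem_nhds b one_pos)
      (Filter.Eventually.of_forall fun s =>
        ((hker_cont s).aestronglyMeasurable.mul hint.1))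
      (Integrable.bdd_mul (c := 2 * ((Real.sqrt (4*π*t))⁻¹ * (Real.sqrt (4*π*t))⁻¹)) hint (hker_cont b).aestronglyMeasurable ?_)
      ((hKdker_cont b).aestronglyMeasurable.mul hint.1)
      (Filter.Eventually.of_forall fun y => fun s _ => ?_)
      ((hint.abs.const_mul _))
      (Filter.Eventually.of_forall fun y => fun s _ => ?_)
    · exact this.2
    · -- boundedness of the kernel
      refine Filter.Eventually.of_forall fun y => ?_
      rw [Real.norm_eq_abs, abs_mul, abs_of_nonneg (heatK1_nonneg _ _)]
      have h1 := heatK1_le ht (a - y.1)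
      have h2 : |heatK1 (b - y.2) t - heatK1 (b + y.2) t| ≤ 2 * (Real.sqrt (4*π*t))⁻¹ := by
        have := heatK1_le ht (b - y.2)
        have := heatK1_le ht (b + y.2)
        have := heatK1_nonneg (b - y.2) t
        have := heatK1_nonneg (b + y.2) t
        rw [abs_sub_le_iff]; constructor <;> linarith
      calc heatK1 (a - y.1) t * |heatK1 (b - y.2) t - heatK1 (b + y.2) t|
          ≤ (Real.sqrt (4*π*t))⁻¹ * (2 * (Real.sqrt (4*π*t))⁻¹) :=
            mul_le_mul h1 h2 (abs_nonneg _) hc0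
        _ = 2 * ((Real.sqrt (4*π*t))⁻¹ * (Real.sqrt (4*π*t))⁻¹) := by ring
    · -- bound on F'
      rw [Real.norm_eq_abs, abs_mul]
      exact mul_le_mul_of_nonneg_right (hbnd_Kdker s y) (abs_nonneg _)
    · -- differentiability in s
      exact ((hasDerivAt_diff_kernel ht y.2 s).const_mul (heatK1 (a - y.1) t)).mul_const (φ y)
  -- Step 2 : integrability of the two integrands
  have hIG : IntegrableOn (fun y => heatK1 (a - y.1) t * Kd t b y.2 * φ y) upperHalf := by
    exact Integrable.bdd_mul hint (hKdker_cont b).aestronglyMeasurable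
      (Filter.Eventually.of_forall (fun y => by
        rw [Real.norm_eq_abs]; exact hbnd_Kdker b y))
  have hIH : IntegrableOn
      (fun y => heatK1 (a - y.1) t * Nk t b y.2 * fderiv ℝ φ y (0,1)) upperHalf := by
    exact Integrable.bdd_mul (c := (Real.sqrt (4*π*t))⁻¹ * (2 * (Real.sqrt (4*π*t))⁻¹)) hint2 hNkker_cont.aestronglyMeasurable
      (Filter.Eventually.of_forall fun y => by
        rw [Real.norm_eq_abs, abs_mul, abs_of_nonneg (heatK1_nonneg _ _),
          abs_of_nonneg (Nk_nonneg _ _ _)]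
        exact mul_le_mul (heatK1_le ht _) (Nk_le ht _ _) (Nk_nonneg _ _ _) hc0)
  -- slicing
  have hslice : ∀ {f : ℝ × ℝ → ℝ}, IntegrableOn f upperHalf →
      ∀ᵐ y₁ : ℝ, IntegrableOn (fun y₂ => f (y₁, y₂)) (Set.Ioi 0) := by
    intro f hf
    rw [hUH] at hf
    have h1 : Integrable f
        (((volume : Measure ℝ).restrict Set.univ).prod
          ((volume : Measure ℝ).restrict (Set.Ioi 0))) := by
      rw [Measure.prod_restrict]
      rw [show ((volume : Measure ℝ).prod (volume : Measure ℝ)) = (volume : Measure (ℝ × ℝ))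
        from (Measure.volume_eq_prod ℝ ℝ).symm]
      exact hf
    have h2 := h1.prod_right_ae
    rw [Measure.restrict_univ] at h2
    exact h2
  -- the GH function and its Fubini computation
  set GH : ℝ × ℝ → ℝ := fun y =>
    heatK1 (a - y.1) t * Kd t b y.2 * φ y
      - heatK1 (a - y.1) t * Nk t b y.2 * fderiv ℝ φ y (0,1) with hGH
  have hIGH : IntegrableOn GH upperHalf := hIG.sub hIH
  have fub : ∫ y in upperHalf, GH y = ∫ y₁ : ℝ, ∫ y₂ in Set.Ioi (0:ℝ), GH (y₁, y₂) := by
    rw [hUH]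
    rw [show (volume : Measure (ℝ × ℝ)) = (volume : Measure ℝ).prod volume from Measure.volume_eq_prod ℝ ℝ]
    rw [setIntegral_prod _ (by rw [← Measure.volume_eq_prod ℝ ℝ, ← hUH]; exact hIGH)]
    rw [setIntegral_univ]
  have inner : ∀ᵐ y₁ : ℝ, (∫ y₂ in Set.Ioi (0:ℝ), GH (y₁, y₂))
      = 2 * heatK1 b t * (heatK1 (a - y₁) t * φ (y₁, 0)) := by
    filter_upwards [hslice hint, hslice hint2] with y₁ h1 h2
    have hpt : ∀ y₂ : ℝ, GH (y₁, y₂) = heatK1 (a - y₁) t *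
        (Kd t b y₂ * φ (y₁, y₂) - Nk t b y₂ * fderiv ℝ φ (y₁, y₂) (0,1)) := by
      intro y₂; simp only [hGH]; ring
    calc (∫ y₂ in Set.Ioi (0:ℝ), GH (y₁, y₂))
        = ∫ y₂ in Set.Ioi (0:ℝ), heatK1 (a - y₁) t *
            (Kd t b y₂ * φ (y₁, y₂) - Nk t b y₂ * fderiv ℝ φ (y₁, y₂) (0,1)) :=
          integral_congr_ae (Filter.Eventually.of_forall hpt)
      _ = heatK1 (a - y₁) t * ∫ y₂ in Set.Ioi (0:ℝ),
            (Kd t b y₂ * φ (y₁, y₂) - Nk t b y₂ * fderiv ℝ φ (y₁, y₂) (0,1)) :=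
          integral_const_mul _ _
      _ = heatK1 (a - y₁) t * (2 * heatK1 b t * φ (y₁, 0)) := by
          rw [inner_ibp ht (hcont_phi y₁) (hdiff_phi y₁)
            (fun y₂ hy₂ => hM (y₁, y₂) hy₂) h1 h2]
      _ = 2 * heatK1 b t * (heatK1 (a - y₁) t * φ (y₁, 0)) := by ring
  have hGHval : ∫ y in upperHalf, GH y
      = 2 * heatK1 b t * ∫ y₁ : ℝ, heatK1 (a - y₁) t * φ (y₁, 0) := by
    rw [fub, integral_congr_ae inner, integral_const_mul]
  -- conclude
  have hsplit : ∫ y in upperHalf, heatK1 (a - y.1) t * Kd t b y.2 * φ y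
      = (∫ y in upperHalf,
          heatK1 (a - y.1) t * Nk t b y.2 * fderiv ℝ φ y (0,1))
        + 2 * heatK1 b t * ∫ y₁ : ℝ, heatK1 (a - y₁) t * φ (y₁, 0) := by
    have h1 : ∫ y in upperHalf, GH y
        = (∫ y in upperHalf, heatK1 (a - y.1) t * Kd t b y.2 * φ y)
          - ∫ y in upperHalf, heatK1 (a - y.1) t * Nk t b y.2 * fderiv ℝ φ y (0,1) :=
      integral_sub hIG hIH
    rw [hGHval] at h1
    linarith
  rw [hsplit] at step1
  convert step1 using 2
  rfl

end
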